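/- arXiv:1901.03101 — 2 statements merged into one kernel-verified Lean document; each statement's English description precedes it below -/
import Mathlib

section
/- Let G be a finitely generated pro-p group of positive rank gradient, with a filtration series S: (G_i). (1) If H ≤ G is a finitely generated closed subgroup with |G : H| = ∞, then lim_{i→∞} d(H ∩ G_i)/d(G_i) = 0. (2) If H ≤ G is an infinite closed subgroup, then lim_{i→∞} d(H G_i)/d(G_i) = 0. -/
open scoped Pointwise commutatorElement
open Filter Topology

/-- A pro-`p` group: a compact, Hausdorff, totally disconnected topological group in which
every open normal subgroup has index a power of `p`. -/
def IsProPGroup (p : ℕ) (G : Type*) [Group G] [TopologicalSpace G] [IsTopologicalGroup G] : Prop :=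
  CompactSpace G ∧ T2Space G ∧ TotallyDisconnectedSpace G ∧
    ∀ U : Subgroup G, U.Normal → IsOpen (U : Set G) → ∃ n : ℕ, U.index = p ^ n

/-- A subgroup `H` of a topological group is topologically finitely generated:
there is a finite subset of `H` whose closed subgroup closure is `H`. -/
def TopFG {G : Type*} [Group G] [TopologicalSpace G] (H : Subgroup G) : Prop :=
  ∃ S : Finset G, (S : Set G) ⊆ (H : Set G) ∧
    closure ((Subgroup.closure (S : Set G) : Subgroup G) : Set G) = (H : Set G)

/-- The minimal number of topological generators `d(H)` of a subgroup `H`. -/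
noncomputable def topRank {G : Type*} [Group G] [TopologicalSpace G] (H : Subgroup G) : ℕ :=
  sInf {n : ℕ | ∃ S : Finset G, S.card = n ∧ (S : Set G) ⊆ (H : Set G) ∧
    closure ((Subgroup.closure (S : Set G) : Subgroup G) : Set G) = (H : Set G)}

/-- The rank gradient `RG(G) = inf over open subgroups H of (d(H)-1)/|G:H|`. -/
noncomputable def rankGradient (G : Type*) [Group G] [TopologicalSpace G] : ℝ :=
  sInf {x : ℝ | ∃ H : Subgroup G, IsOpen (H : Set G) ∧
    x = ((topRank H : ℝ) - 1) / (H.index : ℝ)}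

/-- A filtration series: a descending chain of open normal subgroups, starting at `G`,
with trivial intersection. -/
def IsFiltrationSeries {G : Type*} [Group G] [TopologicalSpace G] (S : ℕ → Subgroup G) : Prop :=
  S 0 = ⊤ ∧ (∀ i, S (i + 1) ≤ S i) ∧ (∀ i, (S i).Normal) ∧
    (∀ i, IsOpen ((S i : Subgroup G) : Set G)) ∧ (⨅ i, S i) = ⊥

/-- The Hausdorff dimension of `H ≤ G` with respect to a series `S`:
`liminf_i log_p |H S_i : S_i| / log_p |G : S_i|`; here `|H S_i : S_i| = |H : H ∩ S_i|`
is the relative index. -/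
noncomputable def hDim (p : ℕ) {G : Type*} [Group G] (S : ℕ → Subgroup G) (H : Subgroup G) : ℝ :=
  Filter.liminf
    (fun i => Real.logb (p : ℝ) (((S i).relIndex H : ℝ)) /
      Real.logb (p : ℝ) (((S i).index : ℝ))) Filter.atTop

/-- The Hausdorff spectrum: all values of `hDim` over closed subgroups. -/
noncomputable def hSpectrum (p : ℕ) (G : Type*) [Group G] [TopologicalSpace G]
    (S : ℕ → Subgroup G) : Set ℝ :=
  {x | ∃ H : Subgroup G, IsClosed (H : Set G) ∧ hDim p S H = x}

/-- The normal Hausdorff spectrum: all values of `hDim` over closed normal subgroups. -/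
noncomputable def hSpectrumNormal (p : ℕ) (G : Type*) [Group G] [TopologicalSpace G]
    (S : ℕ → Subgroup G) : Set ℝ :=
  {x | ∃ H : Subgroup G, IsClosed (H : Set G) ∧ H.Normal ∧ hDim p S H = x}

/-- The Frattini series `Φ_0(G) = G`, `Φ_i(G) = [Φ_{i-1}(G),Φ_{i-1}(G)] Φ_{i-1}(G)^p`
(taking closed subgroup generation). -/
noncomputable def frattiniSeries (p : ℕ) (G : Type*) [Group G] [TopologicalSpace G]
    [IsTopologicalGroup G] : ℕ → Subgroup G
  | 0 => ⊤
  | (i + 1) =>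
      (Subgroup.closure
        ({x | ∃ a ∈ frattiniSeries p G i, ∃ b ∈ frattiniSeries p G i, x = ⁅a, b⁆} ∪
         {x | ∃ a ∈ frattiniSeries p G i, x = a ^ p})).topologicalClosure

/-- `Z` is the Zassenhaus series of `G`: `Z_1(G) = G` and
`Z_i(G) = Z_{⌈i/p⌉}(G)^p ∏_{1 ≤ j < i} [Z_j(G), Z_{i-j}(G)]` for `i ≥ 2`. -/
def IsZassenhausSeries (p : ℕ) {G : Type*} [Group G] [TopologicalSpace G] [IsTopologicalGroup G]
    (Z : ℕ → Subgroup G) : Prop :=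
  Z 1 = ⊤ ∧ ∀ i, 2 ≤ i → Z i =
    (Subgroup.closure
      ({x | ∃ a ∈ Z ((i + p - 1) / p), x = a ^ p} ∪
       {x | ∃ j, 1 ≤ j ∧ j < i ∧ ∃ a ∈ Z j, ∃ b ∈ Z (i - j), x = ⁅a, b⁆})).topologicalClosure

/-- A free pro-`p` group on a finite (topological) generating set, characterised by the
universal property with respect to continuous homomorphisms into pro-`p` groups. -/
def IsFreeProP (p : ℕ) (G : Type*) [Group G] [TopologicalSpace G] [IsTopologicalGroup G] : Prop :=
  IsProPGroup p G ∧
  ∃ X : Finset G,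
    closure ((Subgroup.closure (X : Set G) : Subgroup G) : Set G) = Set.univ ∧
    ∀ (H : Type) [Group H] [TopologicalSpace H] [IsTopologicalGroup H],
      IsProPGroup p H → ∀ f : G → H, ∃! φ : G →* H, Continuous φ ∧ ∀ x ∈ X, φ x = f x

/-- Continuous (i.e. locally constant) homomorphisms `G → F_p`; these are exactly the
elements of `H¹(G, F_p)`. -/
def IsHom1 (p : ℕ) {G : Type*} [Group G] [TopologicalSpace G] (a : G → ZMod p) : Prop :=
  IsLocallyConstant a ∧ ∀ x y : G, a (x * y) = a x + a y

/-- Continuous 2-cocycles on `G` with values in `F_p` (trivial action). -/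
def IsCocycle2 (p : ℕ) {G : Type*} [Group G] [TopologicalSpace G] (f : G × G → ZMod p) : Prop :=
  IsLocallyConstant f ∧ ∀ x y z : G, f (x * y, z) + f (x, y) = f (x, y * z) + f (y, z)

/-- Continuous 2-coboundaries on `G` with values in `F_p` (trivial action). -/
def IsCoboundary2 (p : ℕ) {G : Type*} [Group G] [TopologicalSpace G]
    (f : G × G → ZMod p) : Prop :=
  ∃ c : G → ZMod p, IsLocallyConstant c ∧ ∀ x y : G, f (x, y) = c x - c (x * y) + c y

/-- A Demushkin pro-`p` group: a Poincaré duality pro-`p` group of dimension 2, via the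
standard cohomological characterisation: `H¹(G,F_p)` is finite, `H²(G,F_p)` is
one-dimensional, and the cup product pairing `H¹ × H¹ → H²` is non-degenerate. -/
def IsDemushkin (p : ℕ) (G : Type*) [Group G] [TopologicalSpace G] [IsTopologicalGroup G] : Prop :=
  IsProPGroup p G ∧
  {a : G → ZMod p | IsHom1 p a}.Finite ∧
  (∃ f₀ : G × G → ZMod p, IsCocycle2 p f₀ ∧ ¬ IsCoboundary2 p f₀ ∧
    ∀ f : G × G → ZMod p, IsCocycle2 p f → ∃ k : ZMod p, IsCoboundary2 p (f - k • f₀)) ∧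
  (∀ a : G → ZMod p, IsHom1 p a → a ≠ 0 →
    (∃ b : G → ZMod p, IsHom1 p b ∧ ¬ IsCoboundary2 p (fun q => a q.1 * b q.2)) ∧
    (∃ b : G → ZMod p, IsHom1 p b ∧ ¬ IsCoboundary2 p (fun q => b q.1 * a q.2)))

/-- The verbal subgroup of (the subgroup) `H` determined by a set `W` of group words. -/
def verbalIn {G : Type*} [Group G] (H : Subgroup G) (W : Set (FreeGroup ℕ)) : Subgroup G :=
  Subgroup.closure {x | ∃ w ∈ W, ∃ ν : ℕ → G, (∀ n, ν n ∈ H) ∧ x = FreeGroup.lift ν w}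

/-- An iterated verbal filtration: a filtration series in which each term is a verbal
subgroup of the preceding one. -/
def IsIteratedVerbalFiltration {G : Type*} [Group G] [TopologicalSpace G]
    (S : ℕ → Subgroup G) : Prop :=
  IsFiltrationSeries S ∧ ∀ i, ∃ W : Set (FreeGroup ℕ), S (i + 1) = verbalIn (S i) W

/-- `K` is subnormal in `G` via (topologically) finitely generated successive quotients:
there is a chain `G = C_0 ⊵ C_1 ⊵ ... ⊵ C_s = K` of closed subgroups, each normal in the
preceding one, such that each `C_{i-1}` is topologically generated by `C_i` together with
finitely many elements (i.e. each quotient `C_{i-1}/C_i` is topologically finitely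
generated). -/
def SubnormalViaFGQuotients {G : Type*} [Group G] [TopologicalSpace G] (K : Subgroup G) : Prop :=
  ∃ (s : ℕ) (C : ℕ → Subgroup G), C 0 = ⊤ ∧ C s = K ∧
    ∀ i < s, IsClosed ((C (i + 1) : Subgroup G) : Set G) ∧ C (i + 1) ≤ C i ∧
      ((C (i + 1)).subgroupOf (C i)).Normal ∧
      ∃ S : Finset G, (S : Set G) ⊆ (C i : Set G) ∧
        closure ((Subgroup.closure ((S : Set G) ∪ (C (i + 1) : Set G)) : Subgroup G) : Set G)
          = ((C i : Subgroup G) : Set G)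

/-- The rank gradient of the quotient `G/N`, for `N` a normal subgroup. -/
noncomputable def quotientRankGradient {G : Type*} [Group G] [TopologicalSpace G]
    (N : Subgroup G) (hN : N.Normal) : ℝ :=
  letI := hN
  rankGradient (G ⧸ N)


section Aux9

variable {G : Type*} [Group G] [TopologicalSpace G] [IsTopologicalGroup G]

private lemma aux9_bddBelow :
    BddBelow {x : ℝ | ∃ H : Subgroup G, IsOpen (H : Set G) ∧
      x = ((topRank H : ℝ) - 1) / (H.index : ℝ)} := by
  refine ⟨-1, ?_⟩
  rintro x ⟨H, -, rfl⟩
  rcases eq_or_ne H.index 0 with h | h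
  · simp [h]
  · have hn : (0 : ℝ) < (H.index : ℝ) := by
      exact_mod_cast Nat.pos_of_ne_zero h
    rw [le_div_iff₀ hn]
    have h1 : (1 : ℝ) ≤ (H.index : ℝ) := by
      exact_mod_cast Nat.one_le_iff_ne_zero.mpr h
    have h0 : (0 : ℝ) ≤ (topRank H : ℝ) := Nat.cast_nonneg _
    nlinarith

private lemma aux9_rg_le (U : Subgroup G) (hU : IsOpen (U : Set G)) :
    rankGradient G ≤ ((topRank U : ℝ) - 1) / (U.index : ℝ) :=
  csInf_le aux9_bddBelow ⟨U, hU, rfl⟩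

private lemma aux9_index_ne_zero (hrg : 0 < rankGradient G)
    (U : Subgroup G) (hU : IsOpen (U : Set G)) : U.index ≠ 0 := by
  intro h0
  have := aux9_rg_le U hU
  rw [h0] at this
  simp only [Nat.cast_zero, div_zero] at this
  linarith

/-- In a compact group, a filtration series is a neighbourhood basis of `1`. -/
private lemma aux9_basis [CompactSpace G] (S : ℕ → Subgroup G)
    (hdec : ∀ i, S (i + 1) ≤ S i) (hopen : ∀ i, IsOpen ((S i : Subgroup G) : Set G))
    (hinf : (⨅ i, S i) = ⊥) {V : Set G} (hV : IsOpen V) (h1 : (1 : G) ∈ V) :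
    ∃ i, ((S i : Subgroup G) : Set G) ⊆ V := by
  have hanti : Antitone S := antitone_nat_of_succ_le hdec
  have hcov : Vᶜ ⊆ ⋃ i, (((S i : Subgroup G) : Set G))ᶜ := by
    intro x hx
    by_contra hx2
    simp only [Set.mem_iUnion, Set.mem_compl_iff, not_exists, not_not] at hx2
    have hxmem : x ∈ (⨅ i, S i) := Subgroup.mem_iInf.mpr hx2
    rw [hinf, Subgroup.mem_bot] at hxmem
    subst hxmem
    exact hx h1
  have hcomp : IsCompact Vᶜ := hV.isClosed_compl.isCompact
  obtain ⟨t, ht⟩ := hcomp.elim_finite_subcover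
    (fun i => (((S i : Subgroup G) : Set G))ᶜ)
    (fun i => ((S i).isClosed_of_isOpen (hopen i)).isOpen_compl) hcov
  refine ⟨t.sup id, fun x hx => ?_⟩
  by_contra hxV
  obtain ⟨i, hit, hxi⟩ := Set.mem_iUnion₂.mp (ht hxV)
  exact hxi (hanti (Finset.le_sup (f := id) hit) hx)

/-- Key Schreier-type bound for the topological rank. -/
private lemma aux9_topRank_le (T : Finset G) (B O : Subgroup G)
    (hTB : (T : Set G) ⊆ (B : Set G))
    (hdense : closure ((Subgroup.closure (T : Set G) : Subgroup G) : Set G) = (B : Set G))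
    (hOopen : IsOpen (O : Set G)) (hBclosed : IsClosed (B : Set G))
    (hfin : O.relIndex B ≠ 0) :
    topRank (B ⊓ O) ≤ O.relIndex B * T.card := by
  classical
  set A : Subgroup G := Subgroup.closure (T : Set G) with hA
  have hAB : A ≤ B := (Subgroup.closure_le B).mpr hTB
  have hrne : O.relIndex A ≠ 0 :=
    fun h => hfin (Subgroup.relIndex_eq_zero_of_le_right hAB h)
  have hrle : O.relIndex A ≤ O.relIndex B := Subgroup.relIndex_le_of_le_right hAB hfin
  haveI : (O.subgroupOf A).FiniteIndex := ⟨hrne⟩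
  have hinj : Set.InjOn ((↑) : ↥A → G) (((↑) : ↥A → G) ⁻¹' (T : Set G)) :=
    Subtype.coe_injective.injOn
  set T' : Finset ↥A := T.preimage (↑) hinj with hT'
  have hT'card : T'.card ≤ T.card := by
    refine Finset.card_le_card_of_injOn (↑) (fun a ha => ?_) Subtype.coe_injective.injOn
    exact Finset.mem_preimage.mp ha
  have hT'gen : Subgroup.closure (T' : Set ↥A) = ⊤ := by
    rw [hT', Finset.coe_preimage]
    exact Subgroup.closure_closure_coe_preimage
  obtain ⟨T₂, hT₂card, hT₂gen⟩ := Subgroup.exists_finset_card_le_mul (O.subgroupOf A) hT'gen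
  set f : ↥(O.subgroupOf A) →* G := A.subtype.comp (O.subgroupOf A).subtype with hf
  set T₃ : Finset G := T₂.image f with hT₃
  have hT₃card : T₃.card ≤ O.relIndex B * T.card := by
    calc T₃.card ≤ T₂.card := Finset.card_image_le
      _ ≤ (O.subgroupOf A).index * T'.card := hT₂card
      _ ≤ O.relIndex B * T.card := Nat.mul_le_mul hrle hT'card
  have hclo : Subgroup.closure (T₃ : Set G) = O ⊓ A := by
    rw [hT₃, Finset.coe_image, ← MonoidHom.map_closure, hT₂gen, ← MonoidHom.range_eq_map, hf,
      MonoidHom.range_comp, Subgroup.range_subtype, Subgroup.subgroupOf_map_subtype]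
  have hOclosed : IsClosed (O : Set G) := O.isClosed_of_isOpen hOopen
  have hKclosed : IsClosed (((B ⊓ O : Subgroup G) : Set G)) := by
    rw [Subgroup.coe_inf]
    exact hBclosed.inter hOclosed
  have hsub : (T₃ : Set G) ⊆ ((B ⊓ O : Subgroup G) : Set G) := by
    intro x hx
    have hx2 : x ∈ O ⊓ A := by
      rw [← hclo]
      exact Subgroup.subset_closure hx
    exact Subgroup.mem_inf.mpr ⟨hAB hx2.2, hx2.1⟩
  have hdense2 :
      closure ((Subgroup.closure (T₃ : Set G) : Subgroup G) : Set G)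
        = ((B ⊓ O : Subgroup G) : Set G) := by
    rw [hclo]
    apply subset_antisymm
    · refine closure_minimal ?_ hKclosed
      intro x hx
      have hx2 : x ∈ O ⊓ A := hx
      exact Subgroup.mem_inf.mpr ⟨hAB hx2.2, hx2.1⟩
    · intro x hx
      have hxBO : x ∈ B ⊓ O := hx
      rw [mem_closure_iff]
      intro W hW hxW
      have hxB : x ∈ closure (A : Set G) := by
        rw [hdense]
        exact hxBO.1
      have hWO : IsOpen (W ∩ (O : Set G)) := hW.inter hOopen
      have hxWO : x ∈ W ∩ (O : Set G) := ⟨hxW, hxBO.2⟩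
      obtain ⟨a, haWO, haA⟩ := mem_closure_iff.mp hxB _ hWO hxWO
      exact ⟨a, haWO.1, Subgroup.mem_inf.mpr ⟨haWO.2, haA⟩⟩
  calc topRank (B ⊓ O) ≤ T₃.card := Nat.sInf_le ⟨T₃, rfl, hsub, hdense2⟩
    _ ≤ O.relIndex B * T.card := hT₃card

private lemma aux9_ratio_le {RG c : ℝ} (hRG : 0 < RG) (hc : 0 ≤ c) {Nn Dd m w : ℕ}
    (hm : m ≠ 0) (hw : w ≠ 0) (hN : (Nn : ℝ) ≤ (m : ℝ) * c)
    (hD : RG * ((m : ℝ) * (w : ℝ)) + 1 ≤ (Dd : ℝ)) :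
    (Nn : ℝ) / (Dd : ℝ) ≤ c / (RG * (w : ℝ)) := by
  have hwpos : (0 : ℝ) < (w : ℝ) := by exact_mod_cast Nat.pos_of_ne_zero hw
  have hmpos : (0 : ℝ) < (m : ℝ) := by exact_mod_cast Nat.pos_of_ne_zero hm
  have hden : (0 : ℝ) < RG * ((m : ℝ) * (w : ℝ)) := by positivity
  have h1 : (Nn : ℝ) / (Dd : ℝ) ≤ ((m : ℝ) * c) / (RG * ((m : ℝ) * (w : ℝ))) := by
    apply div_le_div₀ (by positivity) hN hden (by linarith)
  have h2 : ((m : ℝ) * c) / (RG * ((m : ℝ) * (w : ℝ))) = c / (RG * (w : ℝ)) := by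
    rw [show RG * ((m : ℝ) * (w : ℝ)) = (m : ℝ) * (RG * (w : ℝ)) by ring,
      mul_div_mul_left _ _ (ne_of_gt hmpos)]
  linarith [h1, h2.le, h2.ge]

end Aux9


section Aux9b

variable {G : Type*} [Group G] [TopologicalSpace G] [IsTopologicalGroup G]

private lemma aux9_escape_sup [CompactSpace G] (S : ℕ → Subgroup G)
    (hdec : ∀ i, S (i + 1) ≤ S i) (hnorm : ∀ i, (S i).Normal)
    (hopen : ∀ i, IsOpen ((S i : Subgroup G) : Set G)) (hinf : (⨅ i, S i) = ⊥)
    (hSidx : ∀ i, (S i).index ≠ 0) (H : Subgroup G) (hHcl : IsClosed (H : Set G))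
    (hHidx : H.index = 0) :
    Filter.Tendsto (fun i => (H ⊔ S i).index) Filter.atTop Filter.atTop := by
  have hanti : Antitone S := antitone_nat_of_succ_le hdec
  have hu0 : ∀ i, (H ⊔ S i).index ≠ 0 := fun i =>
    ne_zero_of_dvd_ne_zero (hSidx i) (Subgroup.index_dvd_of_le le_sup_right)
  have hmono : Monotone (fun i => (H ⊔ S i).index) := monotone_nat_of_le_succ fun i =>
    Nat.le_of_dvd (Nat.pos_of_ne_zero (hu0 (i + 1)))
      (Subgroup.index_dvd_of_le (sup_le_sup_left (hdec i) H))
  refine tendsto_atTop_atTop_of_monotone hmono ?_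
  by_contra hbd
  push_neg at hbd
  obtain ⟨b, hb⟩ := hbd
  have hbdd : BddAbove (Set.range fun i => (H ⊔ S i).index) :=
    ⟨b, by rintro x ⟨i, rfl⟩; exact (hb i).le⟩
  obtain ⟨N, hN⟩ := Nat.sSup_mem (Set.range_nonempty fun i => (H ⊔ S i).index) hbdd
  have hconstU : ∀ i, N ≤ i → H ⊔ S i = H ⊔ S N := by
    intro i hi
    have hle : H ⊔ S i ≤ H ⊔ S N := sup_le_sup_left (hanti hi) H
    have hui : (H ⊔ S i).index = (H ⊔ S N).index := by
      refine le_antisymm ?_ (hmono hi)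
      have h2 := le_csSup hbdd (Set.mem_range_self (f := fun i => (H ⊔ S i).index) i)
      rw [← hN] at h2
      exact h2
    have hone : (H ⊔ S i).relIndex (H ⊔ S N) = 1 :=
      Nat.eq_of_mul_eq_mul_right (Nat.pos_of_ne_zero (hu0 N))
        (by rw [one_mul]; exact (Subgroup.relIndex_mul_index hle).trans hui)
    exact le_antisymm hle (Subgroup.relIndex_eq_one.mp hone)
  have hHeq : H = H ⊔ S N := by
    refine le_antisymm le_sup_left ?_
    intro x hx
    have hxcl : x ∈ closure (H : Set G) := by
      rw [mem_closure_iff]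
      intro W hW hxW
      have hVopen : IsOpen ((fun g => x * g) ⁻¹' W) := hW.preimage (continuous_mul_left x)
      have hV1 : (1 : G) ∈ (fun g => x * g) ⁻¹' W := by simpa using hxW
      obtain ⟨i0, hi0⟩ := aux9_basis S hdec hopen hinf hVopen hV1
      have hxi : x ∈ H ⊔ S (max N i0) := by
        rw [hconstU (max N i0) (le_max_left _ _)]
        exact hx
      haveI := hnorm (max N i0)
      have hxi2 : x ∈ (H : Set G) * ((S (max N i0) : Subgroup G) : Set G) := by
        rw [← Subgroup.mul_normal H (S (max N i0))]
        exact hxi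
      obtain ⟨h, hh, s, hs, hhs⟩ := Set.mem_mul.mp hxi2
      refine ⟨h, ?_, hh⟩
      have hsinv : s⁻¹ ∈ ((S (max N i0) : Subgroup G) : Set G) := (S (max N i0)).inv_mem hs
      have hmem : x * s⁻¹ ∈ W := hi0 (hanti (le_max_right _ _) hsinv)
      rwa [← hhs, mul_inv_cancel_right] at hmem
    rwa [hHcl.closure_eq] at hxcl
  exact hu0 N (hHeq ▸ hHidx)

private lemma aux9_escape_inf (S : ℕ → Subgroup G)
    (hdec : ∀ i, S (i + 1) ≤ S i) (hnorm : ∀ i, (S i).Normal) (hinf : (⨅ i, S i) = ⊥)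
    (hSidx : ∀ i, (S i).index ≠ 0) (H : Subgroup G) (hHinf : (H : Set G).Infinite) :
    Filter.Tendsto (fun i => (S i).relIndex H) Filter.atTop Filter.atTop := by
  have hanti : Antitone S := antitone_nat_of_succ_le hdec
  have hk0 : ∀ i, (S i).relIndex H ≠ 0 := fun i => by
    haveI := hnorm i
    exact ne_zero_of_dvd_ne_zero (hSidx i) (Subgroup.relIndex_dvd_index_of_normal (S i) H)
  have hdvd : ∀ i j, i ≤ j → ((S j).subgroupOf H) ≤ ((S i).subgroupOf H) := fun i j hij x hx =>
    Subgroup.mem_subgroupOf.mpr (hanti hij (Subgroup.mem_subgroupOf.mp hx))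
  have hmono : Monotone fun i => (S i).relIndex H := monotone_nat_of_le_succ fun i =>
    Nat.le_of_dvd (Nat.pos_of_ne_zero (hk0 (i + 1)))
      (Subgroup.index_dvd_of_le (hdvd i (i + 1) (Nat.le_succ i)))
  refine tendsto_atTop_atTop_of_monotone hmono ?_
  by_contra hbd
  push_neg at hbd
  obtain ⟨b, hb⟩ := hbd
  have hbdd : BddAbove (Set.range fun i => (S i).relIndex H) :=
    ⟨b, by rintro x ⟨i, rfl⟩; exact (hb i).le⟩
  obtain ⟨N, hN⟩ := Nat.sSup_mem (Set.range_nonempty fun i => (S i).relIndex H) hbdd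
  have hconst : ∀ i, N ≤ i → (S i).subgroupOf H = (S N).subgroupOf H := by
    intro i hi
    have hle : (S i).subgroupOf H ≤ (S N).subgroupOf H := hdvd N i hi
    have hui : (S i).relIndex H = (S N).relIndex H := by
      refine le_antisymm ?_ (hmono hi)
      have h2 := le_csSup hbdd (Set.mem_range_self (f := fun i => (S i).relIndex H) i)
      rw [← hN] at h2
      exact h2
    have hone : ((S i).subgroupOf H).relIndex ((S N).subgroupOf H) = 1 :=
      Nat.eq_of_mul_eq_mul_right (Nat.pos_of_ne_zero (hk0 N))
        (by rw [one_mul]; exact (Subgroup.relIndex_mul_index hle).trans hui)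
    exact le_antisymm hle (Subgroup.relIndex_eq_one.mp hone)
  have hSNH : S N ⊓ H ≤ ⊥ := by
    rw [← hinf]
    refine le_iInf fun j => ?_
    rcases le_total j N with hj | hj
    · exact inf_le_left.trans (hanti hj)
    · have h1 : S j ⊓ H = S N ⊓ H := by
        calc S j ⊓ H = ((S j).subgroupOf H).map H.subtype :=
              (Subgroup.subgroupOf_map_subtype _ _).symm
          _ = ((S N).subgroupOf H).map H.subtype := by rw [hconst j hj]
          _ = S N ⊓ H := Subgroup.subgroupOf_map_subtype _ _
      rw [← h1]
      exact inf_le_left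
  have hbot : (S N).subgroupOf H = ⊥ := by
    rw [Subgroup.eq_bot_iff_forall]
    intro x hx
    have hx1 : (x : G) ∈ S N ⊓ H := ⟨Subgroup.mem_subgroupOf.mp hx, x.2⟩
    exact Subtype.ext (Subgroup.mem_bot.mp (hSNH hx1))
  have hcard : (S N).relIndex H = Nat.card ↥H := by
    show ((S N).subgroupOf H).index = _
    rw [hbot, Subgroup.index_bot]
  have hfin : Finite ↥H := Nat.finite_of_card_ne_zero (hcard ▸ hk0 N)
  exact hHinf (Set.finite_coe_iff.mp hfin)

end Aux9b

/-- **Lemma.** Let `G` be a finitely generated pro-`p` group of positive rank gradient with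
a filtration series `S : (G_i)`. (1) If `H ≤ G` is a finitely generated closed subgroup of
infinite index, then `d(H ∩ G_i)/d(G_i) → 0`. (2) If `H ≤ G` is an infinite closed
subgroup, then `d(H G_i)/d(G_i) → 0`. -/
theorem statement9 (p : ℕ) (hp : p.Prime) (G : Type*) [Group G] [TopologicalSpace G]
    [IsTopologicalGroup G] (hG : IsProPGroup p G) (hfg : TopFG (⊤ : Subgroup G))
    (hrg : 0 < rankGradient G) (S : ℕ → Subgroup G) (hS : IsFiltrationSeries S) :
    (∀ H : Subgroup G, IsClosed (H : Set G) → TopFG H → H.index = 0 →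
      Filter.Tendsto (fun i => (topRank (H ⊓ S i) : ℝ) / (topRank (S i) : ℝ))
        Filter.atTop (nhds 0)) ∧
    (∀ H : Subgroup G, IsClosed (H : Set G) → (H : Set G).Infinite →
      Filter.Tendsto (fun i => (topRank (H ⊔ S i) : ℝ) / (topRank (S i) : ℝ))
        Filter.atTop (nhds 0)) := by
  classical
  obtain ⟨hcomp, ht2, htd, hppow⟩ := hG
  haveI : CompactSpace G := hcomp
  obtain ⟨hS0, hSdec, hSnorm, hSopen, hSinf⟩ := hS
  have hidx : ∀ U : Subgroup G, IsOpen (U : Set G) → U.index ≠ 0 :=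
    fun U hU => aux9_index_ne_zero hrg U hU
  have hSidx : ∀ i, (S i).index ≠ 0 := fun i => hidx _ (hSopen i)
  have hDbound : ∀ i, rankGradient G * ((S i).index : ℝ) + 1 ≤ (topRank (S i) : ℝ) := by
    intro i
    have h := aux9_rg_le (S i) (hSopen i)
    have hpos : (0 : ℝ) < ((S i).index : ℝ) := by
      exact_mod_cast Nat.pos_of_ne_zero (hSidx i)
    rw [le_div_iff₀ hpos] at h
    linarith
  have hm0 : ∀ (H : Subgroup G) (i : ℕ), (S i).relIndex H ≠ 0 := fun H i => by
    haveI := hSnorm i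
    exact ne_zero_of_dvd_ne_zero (hSidx i) (Subgroup.relIndex_dvd_index_of_normal (S i) H)
  have hw0 : ∀ (H : Subgroup G) (i : ℕ), (H ⊔ S i).index ≠ 0 := fun H i =>
    ne_zero_of_dvd_ne_zero (hSidx i) (Subgroup.index_dvd_of_le le_sup_right)
  have hprod : ∀ (H : Subgroup G) (i : ℕ),
      (S i).index = (S i).relIndex H * (H ⊔ S i).index := by
    intro H i
    haveI := hSnorm i
    rw [← Subgroup.relIndex_mul_index (le_sup_right : S i ≤ H ⊔ S i),
      Subgroup.relIndex_sup_right]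
  constructor
  · intro H hHcl hHfg hHidx
    obtain ⟨T, hT1, hT2⟩ := hHfg
    have hwT : Filter.Tendsto (fun i => (H ⊔ S i).index) Filter.atTop Filter.atTop :=
      aux9_escape_sup S hSdec hSnorm hSopen hSinf hSidx H hHcl hHidx
    have hgT : Filter.Tendsto
        (fun i => (T.card : ℝ) / (rankGradient G * ((H ⊔ S i).index : ℝ)))
        Filter.atTop (nhds 0) := by
      apply Filter.Tendsto.div_atTop (tendsto_const_nhds)
      exact (tendsto_natCast_atTop_atTop.comp hwT).const_mul_atTop hrg
    refine squeeze_zero (fun i => by positivity) (fun i => ?_) hgT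
    have hNle : (topRank (H ⊓ S i) : ℝ) ≤ ((S i).relIndex H : ℝ) * (T.card : ℝ) := by
      have h := aux9_topRank_le T H (S i) hT1 hT2 (hSopen i) hHcl (hm0 H i)
      exact_mod_cast h
    have hD : rankGradient G * (((S i).relIndex H : ℝ) * ((H ⊔ S i).index : ℝ)) + 1
        ≤ (topRank (S i) : ℝ) := by
      have h := hDbound i
      have hcast : ((S i).index : ℝ) = ((S i).relIndex H : ℝ) * ((H ⊔ S i).index : ℝ) := by
        exact_mod_cast congrArg (Nat.cast : ℕ → ℝ) (hprod H i)
      rw [hcast] at h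
      exact h
    exact aux9_ratio_le hrg (Nat.cast_nonneg _) (hm0 H i) (hw0 H i) hNle hD
  · intro H hHcl hHinf
    obtain ⟨T, hT1, hT2⟩ := hfg
    have hmT : Filter.Tendsto (fun i => (S i).relIndex H) Filter.atTop Filter.atTop :=
      aux9_escape_inf S hSdec hSnorm hSinf hSidx H hHinf
    have hgT : Filter.Tendsto
        (fun i => (T.card : ℝ) / (rankGradient G * (((S i).relIndex H) : ℝ)))
        Filter.atTop (nhds 0) := by
      apply Filter.Tendsto.div_atTop (tendsto_const_nhds)
      exact (tendsto_natCast_atTop_atTop.comp hmT).const_mul_atTop hrg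
    refine squeeze_zero (fun i => by positivity) (fun i => ?_) hgT
    have hOopen : IsOpen ((H ⊔ S i : Subgroup G) : Set G) :=
      Subgroup.isOpen_mono le_sup_right (hSopen i)
    have hfin' : (H ⊔ S i).relIndex ⊤ ≠ 0 := by
      rw [Subgroup.relIndex_top_right]
      exact hw0 H i
    have hNle : (topRank (H ⊔ S i) : ℝ) ≤ (((H ⊔ S i).index : ℝ)) * (T.card : ℝ) := by
      have h := aux9_topRank_le T ⊤ (H ⊔ S i) (by simp) hT2 hOopen
        (by rw [Subgroup.coe_top]; exact isClosed_univ) hfin'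
      rw [top_inf_eq, Subgroup.relIndex_top_right] at h
      exact_mod_cast h
    have hD : rankGradient G * (((H ⊔ S i).index : ℝ) * (((S i).relIndex H) : ℝ)) + 1
        ≤ (topRank (S i) : ℝ) := by
      have h := hDbound i
      have hcast : ((S i).index : ℝ) = ((H ⊔ S i).index : ℝ) * (((S i).relIndex H) : ℝ) := by
        rw [mul_comm]
        exact_mod_cast congrArg (Nat.cast : ℕ → ℝ) (hprod H i)
      rw [hcast] at h
      exact h
    exact aux9_ratio_le hrg (Nat.cast_nonneg _) (hw0 H i) (hm0 H i) hNle hD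
end

section
/- Let G be a finitely generated infinite pro-p group, and let N ⊴ G be a finite normal subgroup. Then RG(G/N) = |N| · RG(G). -/
open scoped Pointwise commutatorElement
open Filter Topology

namespace RGAux


lemma ss1 {A : Type*} [Group A] {p : ℕ} (hp : p.Prime) (B : Subgroup A) [hBn : B.Normal]
    (hidx : B.index = p) (S : Finset A) (hS : Subgroup.closure (S : Set A) = ⊤) :
    ∃ T : Finset A, (T : Set A) ⊆ (B : Set A) ∧ Subgroup.closure (T : Set A) = B ∧
      T.card ≤ p * (S.card - 1) + 1 := by
  classical
  have hppos : 0 < p := hp.pos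
  -- pick a generator outside B
  have hSnot : ¬ ((S : Set A) ⊆ (B : Set A)) := by
    intro h
    have : (⊤ : Subgroup A) ≤ B := hS ▸ Subgroup.closure_le B |>.mpr h
    have hB : B = ⊤ := top_le_iff.mp this
    rw [hB, Subgroup.index_top] at hidx
    exact hp.one_lt.ne' hidx.symm
  obtain ⟨t, htS, htB⟩ : ∃ t ∈ S, t ∉ B := by
    by_contra h
    push_neg at h
    exact hSnot fun x hx => h x (Finset.mem_coe.mp hx)
  set q : A →* A ⧸ B := QuotientGroup.mk' B with hq
  have hcardQ : Nat.card (A ⧸ B) = p := by rw [← Subgroup.index_eq_card, hidx]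
  have hfinQ : Finite (A ⧸ B) := Nat.finite_of_card_ne_zero (by rw [hcardQ]; exact hppos.ne')
  have hqt1 : q t ≠ 1 := by
    intro h
    exact htB ((QuotientGroup.eq_one_iff t).mp h)
  have horder : orderOf (q t) = p := by
    rcases (Nat.dvd_prime hp).mp (hcardQ ▸ orderOf_dvd_natCard (q t)) with h | h
    · exact absurd (orderOf_eq_one_iff.mp h) hqt1
    · exact h
  have hzt : Subgroup.zpowers (q t) = ⊤ := by
    apply Subgroup.eq_top_of_card_eq
    rw [Nat.card_zpowers, horder, hcardQ]
  have hz : ∀ g : A ⧸ B, ∃ i, i < p ∧ (q t) ^ i = g := by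
    intro g
    have : g ∈ Subgroup.zpowers (q t) := hzt ▸ Subgroup.mem_top g
    rw [← mem_powers_iff_mem_zpowers] at this
    obtain ⟨n, hn⟩ := this
    refine ⟨n % p, Nat.mod_lt _ hppos, ?_⟩
    rw [← horder, pow_mod_orderOf]
    exact hn
  -- membership equivalence
  have hmemB : ∀ g s : A, g * s⁻¹ ∈ B ↔ q s = q g := by
    intro g s
    constructor
    · intro h
      have h2 : q (g * s⁻¹) = 1 := (QuotientGroup.eq_one_iff _).mpr h
      rw [map_mul, map_inv, mul_inv_eq_one] at h2
      exact h2.symm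
    · intro h
      have h2 : q (g * s⁻¹) = 1 := by rw [map_mul, map_inv, mul_inv_eq_one, h]
      exact (QuotientGroup.eq_one_iff _).mp h2
  -- the transversal
  set R : Finset A := (Finset.range p).image (t ^ ·) with hRdef
  have hmemR : ∀ s : A, s ∈ (R : Set A) ↔ ∃ i, i < p ∧ t ^ i = s := by
    intro s
    simp [hRdef, Finset.mem_image, Finset.mem_range]
  have hR : Subgroup.IsComplement (B : Set A) (R : Set A) := by
    rw [Subgroup.isComplement_iff_existsUnique_mul_inv_mem]
    intro g
    obtain ⟨i, hip, hi⟩ := hz (q g)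
    refine ⟨⟨t ^ i, (hmemR _).mpr ⟨i, hip, rfl⟩⟩, ?_, ?_⟩
    · show g * (t ^ i)⁻¹ ∈ B
      rw [hmemB]
      rw [← hi, map_pow]
    · rintro ⟨s, hs⟩ hgs
      obtain ⟨j, hjp, hj⟩ := (hmemR s).mp hs
      apply Subtype.ext
      show s = t ^ i
      have : q s = q g := (hmemB g s).mp hgs
      rw [← hj] at this ⊢
      rw [map_pow, ← hi] at this
      have := pow_inj_mod.mp this
      rw [horder, Nat.mod_eq_of_lt hjp, Nat.mod_eq_of_lt hip] at this
      rw [this]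
  have hR1 : (1 : A) ∈ (R : Set A) := (hmemR 1).mpr ⟨0, hppos, pow_zero t⟩
  -- Schreier generators
  set φ : A → A := fun g => g * ((hR.toRightFun g : A))⁻¹ with hφ
  have hgen := Subgroup.closure_mul_image_eq hR hR1 hS
  have hφB : ∀ g, φ g ∈ B := fun g => hR.mul_inv_toRightFun_mem g
  -- the image as a finset
  set T₀ : Finset A := (R * S).image φ with hT₀
  have hT₀coe : (T₀ : Set A) = ((R : Set A) * (S : Set A)).image φ := by
    rw [hT₀, Finset.coe_image, Finset.coe_mul]
  have hclT₀ : Subgroup.closure (T₀ : Set A) = B := by rw [hT₀coe]; exact hgen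
  -- generators coming from powers of t are trivial
  have hφpow : ∀ i, i < p → φ (t ^ i) = 1 := by
    intro i hip
    have hmem : t ^ i ∈ (R : Set A) := (hmemR _).mpr ⟨i, hip, rfl⟩
    have huniq := Subgroup.isComplement_iff_existsUnique_mul_inv_mem.mp hR (t ^ i)
    have h1 : (t ^ i) * ((⟨t ^ i, hmem⟩ : (R : Set A)) : A)⁻¹ ∈ B := by
      simpa using B.one_mem
    have h2 := huniq.unique (hR.mul_inv_toRightFun_mem (t ^ i)) h1
    rw [hφ]
    simp only
    rw [h2]
    simp
  set P : Finset A := (Finset.range (p - 1)).image (fun i => t ^ (i + 1)) with hP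
  have hPsub : P ⊆ R * S := by
    intro x hx
    rw [hP, Finset.mem_image] at hx
    obtain ⟨i, hi, rfl⟩ := hx
    rw [Finset.mem_range] at hi
    have : t ^ (i + 1) = t ^ i * t := by rw [pow_succ]
    rw [this]
    exact Finset.mul_mem_mul (Finset.mem_image.mpr ⟨i, Finset.mem_range.mpr (by omega), rfl⟩) htS
  have hpowinj : ∀ i j, i < p → j < p → t ^ i = t ^ j → i = j := by
    intro i j hi hj hij
    have : q (t ^ i) = q (t ^ j) := by rw [hij]
    rw [map_pow, map_pow] at this
    have := pow_inj_mod.mp this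
    rwa [horder, Nat.mod_eq_of_lt hi, Nat.mod_eq_of_lt hj] at this
  have hcardP : P.card = p - 1 := by
    rw [hP, Finset.card_image_of_injOn, Finset.card_range]
    intro i hi j hj hij
    simp only [Finset.coe_range, Set.mem_Iio] at hi hj
    have := hpowinj (i+1) (j+1) (by omega) (by omega) hij
    omega
  have hφP : ∀ x ∈ P, φ x = 1 := by
    intro x hx
    rw [hP, Finset.mem_image] at hx
    obtain ⟨i, hi, rfl⟩ := hx
    rw [Finset.mem_range] at hi
    exact hφpow (i + 1) (by omega)
  set T : Finset A := T₀.erase 1 with hT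
  have hTsub : (T : Set A) ⊆ (B : Set A) := by
    intro x hx
    rw [hT] at hx
    have hx' : x ∈ T₀ := Finset.mem_of_mem_erase hx
    rw [hT₀, Finset.mem_image] at hx'
    obtain ⟨g, _, rfl⟩ := hx'
    exact hφB g
  have hclT : Subgroup.closure (T : Set A) = B := by
    apply le_antisymm
    · exact (Subgroup.closure_le B).mpr hTsub
    · rw [← hclT₀]
      apply Subgroup.closure_le _ |>.mpr
      intro x hx
      rcases eq_or_ne x 1 with rfl | hxne
      · exact Subgroup.one_mem _
      · exact Subgroup.subset_closure (Finset.mem_coe.mpr (Finset.mem_erase.mpr ⟨hxne, hx⟩))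
  refine ⟨T, hTsub, hclT, ?_⟩
  -- cardinality count
  have hTsub2 : T ⊆ ((R * S) \ P).image φ := by
    intro x hx
    rw [hT, Finset.mem_erase] at hx
    obtain ⟨hxne, hx⟩ := hx
    rw [hT₀, Finset.mem_image] at hx
    obtain ⟨g, hg, rfl⟩ := hx
    refine Finset.mem_image.mpr ⟨g, Finset.mem_sdiff.mpr ⟨hg, fun hgP => hxne (hφP g hgP)⟩, rfl⟩
  have h1 : T.card ≤ (R * S).card - P.card := by
    calc T.card ≤ (((R * S) \ P).image φ).card := Finset.card_le_card hTsub2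
    _ ≤ ((R * S) \ P).card := Finset.card_image_le
    _ = (R * S).card - P.card := Finset.card_sdiff_of_subset hPsub
  have h2 : (R * S).card ≤ p * S.card := by
    calc (R * S).card ≤ R.card * S.card := Finset.card_mul_le
    _ ≤ p * S.card := by
        apply Nat.mul_le_mul_right
        calc R.card ≤ (Finset.range p).card := Finset.card_image_le
        _ = p := Finset.card_range p
  have hd1 : 1 ≤ S.card := Finset.card_pos.mpr ⟨t, htS⟩
  have hmul : p * S.card = p * (S.card - 1) + p := by
    have h : S.card = (S.card - 1) + 1 := by omega
    conv_lhs => rw [h]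
    rw [Nat.mul_succ]
  rw [hcardP] at h1
  omega



lemma exists_index_p {p : ℕ} (hp : p.Prime) {Γ : Type*} [Group Γ] [Finite Γ]
    (hΓ : IsPGroup p Γ) {K : Subgroup Γ} (hK : K ≠ ⊤) :
    ∃ M : Subgroup Γ, K ≤ M ∧ M.Normal ∧ M.index = p := by
  haveI : Fact p.Prime := ⟨hp⟩
  haveI : Group.IsNilpotent Γ := hΓ.isNilpotent
  have hnc : NormalizerCondition Γ := normalizerCondition_of_isNilpotent
  haveI : Finite (Subgroup Γ) := by
    exact Finite.of_injective (fun H => (H : Set Γ)) SetLike.coe_injective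
  obtain ⟨M, hMcoatom, hKM⟩ :=
    ((inferInstance : IsCoatomic (Subgroup Γ)).eq_top_or_exists_le_coatom K).resolve_left hK
  haveI hMnorm : M.Normal := Subgroup.NormalizerCondition.normal_of_coatom M hnc hMcoatom
  refine ⟨M, hKM, hMnorm, ?_⟩
  -- quotient is a nontrivial p-group with no proper nontrivial subgroup
  set Q := Γ ⧸ M with hQ
  have hQp : IsPGroup p Q := hΓ.to_quotient M
  obtain ⟨x, hxM⟩ : ∃ x : Γ, x ∉ M := by
    by_contra h
    push_neg at h
    exact hMcoatom.1 (top_le_iff.mp fun y _ => h y)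
  have hx1 : (QuotientGroup.mk' M) x ≠ 1 := by
    intro h
    exact hxM ((QuotientGroup.eq_one_iff x).mp h)
  set g : Q := (QuotientGroup.mk' M) x with hg
  obtain ⟨k, hk⟩ := (IsPGroup.iff_orderOf.mp hQp) g
  have hk1 : 1 ≤ k := by
    by_contra h
    push_neg at h
    interval_cases k
    rw [pow_zero] at hk
    exact hx1 (orderOf_eq_one_iff.mp hk)
  set h : Q := g ^ (p ^ (k - 1)) with hh
  have hhne : h ≠ 1 := by
    intro hcon
    have := orderOf_dvd_of_pow_eq_one hcon
    rw [hk] at this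
    have := Nat.le_of_dvd (Nat.pow_pos hp.pos) this
    have := Nat.pow_lt_pow_right hp.one_lt (by omega : k - 1 < k)
    omega
  have hordh : orderOf h = p := by
    rw [hh, orderOf_pow, hk, Nat.gcd_eq_right (pow_dvd_pow p (by omega : k - 1 ≤ k)),
      ← Nat.pow_sub_mul_pow p (by omega : k - 1 ≤ k), (by omega : k - (k - 1) = 1), pow_one,
      Nat.mul_div_cancel _ (Nat.pow_pos hp.pos)]
  -- every nontrivial subgroup of Q is ⊤, via the coatom property
  have hzp : Subgroup.zpowers h = ⊤ := by
    set Z := Subgroup.zpowers h with hZ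
    have hcomap : M ≤ Z.comap (QuotientGroup.mk' M) := by
      intro y hy
      have : (QuotientGroup.mk' M) y = 1 := (QuotientGroup.eq_one_iff y).mpr hy
      rw [Subgroup.mem_comap, this]
      exact Z.one_mem
    have htri : Z.comap (QuotientGroup.mk' M) = M ∨ Z.comap (QuotientGroup.mk' M) = ⊤ := by
      rcases eq_or_lt_of_le hcomap with heq | hlt
      · exact Or.inl heq.symm
      · exact Or.inr (hMcoatom.2 _ hlt)
    rcases htri.symm with hic | hic
    · -- comap = ⊤ hence Z = ⊤
      have := congrArg (Subgroup.map (QuotientGroup.mk' M)) hic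
      rwa [Subgroup.map_comap_eq_self_of_surjective (QuotientGroup.mk'_surjective M),
        Subgroup.map_top_of_surjective _ (QuotientGroup.mk'_surjective M)] at this
    · -- comap = M hence Z = ⊥, contradiction
      exfalso
      have h1 : Z = Subgroup.map (QuotientGroup.mk' M) M := by
        have := congrArg (Subgroup.map (QuotientGroup.mk' M)) hic
        rwa [Subgroup.map_comap_eq_self_of_surjective (QuotientGroup.mk'_surjective M)] at this
      have hh1 : h ∈ Subgroup.map (QuotientGroup.mk' M) M := h1 ▸ Subgroup.mem_zpowers h
      obtain ⟨y, hyM, hy⟩ := hh1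
      exact hhne (hy ▸ (QuotientGroup.eq_one_iff y).mpr hyM)
  rw [Subgroup.index_eq_card, ← Subgroup.card_top (G := Q), ← hzp, Nat.card_zpowers, hordh]




variable {X : Type*} [Group X] [TopologicalSpace X] [IsTopologicalGroup X]

lemma open_finiteIndex [CompactSpace X] {K : Subgroup X} (hK : IsOpen (K : Set X)) :
    K.FiniteIndex := by
  have : Finite (X ⧸ K) := K.quotient_finite_of_isOpen hK
  exact K.finiteIndex_of_finite_quotient

lemma chain_step [CompactSpace X] {p : ℕ} (hp : p.Prime)
    (hP : ∀ U : Subgroup X, U.Normal → IsOpen (U : Set X) → ∃ n : ℕ, U.index = p ^ n)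
    {K H : Subgroup X} (hKH : K ≤ H) (hKo : IsOpen (K : Set X)) (hne : K ≠ H) :
    ∃ M : Subgroup X, K ≤ M ∧ M ≤ H ∧ IsOpen (M : Set X) ∧ (M.subgroupOf H).Normal ∧
      M.relIndex H = p := by
  classical
  haveI hKfi : K.FiniteIndex := open_finiteIndex hKo
  set D := K.normalCore with hD
  haveI hDfi : D.FiniteIndex := Subgroup.finiteIndex_normalCore K
  have hDclosed : IsClosed (D : Set X) := K.normalCore_isClosed (K.isClosed_of_isOpen hKo)
  have hDopen : IsOpen (D : Set X) := D.isOpen_of_isClosed_of_finiteIndex hDclosed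
  have hDnormal : D.Normal := K.normalCore_normal
  obtain ⟨n, hDidx⟩ := hP D hDnormal hDopen
  have hDK : D ≤ K := K.normalCore_le
  have hDH : D ≤ H := hDK.trans hKH
  set π := QuotientGroup.mk' D with hπ
  have hπsurj := QuotientGroup.mk'_surjective D
  have hker : π.ker = D := QuotientGroup.ker_mk' D
  have hfinQ : Finite (X ⧸ D) := by
    apply Nat.finite_of_card_ne_zero
    rw [← Subgroup.index_eq_card, hDidx]
    exact pow_ne_zero n hp.pos.ne'
  have hpQ : IsPGroup p (X ⧸ D) := IsPGroup.of_card (by rw [← Subgroup.index_eq_card, hDidx])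
  set Hb := H.map π with hHb
  set Kb := K.map π with hKb
  have hcomapH : Hb.comap π = H := by
    rw [hHb, Subgroup.comap_map_eq, hker, sup_eq_left.mpr hDH]
  have hcomapK : Kb.comap π = K := by
    rw [hKb, Subgroup.comap_map_eq, hker, sup_eq_left.mpr hDK]
  have hKbHb : Kb ≤ Hb := Subgroup.map_mono hKH
  have hKbne : Kb.subgroupOf Hb ≠ ⊤ := by
    intro hcon
    have : Hb ≤ Kb := Subgroup.subgroupOf_eq_top.mp hcon
    have : Hb = Kb := le_antisymm this hKbHb
    apply hne
    rw [← hcomapK, ← hcomapH, this]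
  haveI : Finite ↥Hb := Subtype.finite
  obtain ⟨M'', hKM'', hM''norm, hM''idx⟩ :=
    exists_index_p hp (hpQ.to_subgroup Hb) hKbne
  set M' := M''.map Hb.subtype with hM'
  have hM'le : M' ≤ Hb := Subgroup.map_subtype_le M''
  have hKbM' : Kb ≤ M' := by
    have h1 : (Kb.subgroupOf Hb).map Hb.subtype = Kb ⊓ Hb := Subgroup.subgroupOf_map_subtype _ _
    rw [inf_eq_left.mpr hKbHb] at h1
    rw [← h1, hM']
    exact Subgroup.map_mono hKM''
  set M := M'.comap π with hM
  have hKM : K ≤ M := by rw [hM, ← hcomapK]; exact Subgroup.comap_mono hKbM'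
  have hMH : M ≤ H := by rw [hM, ← hcomapH]; exact Subgroup.comap_mono hM'le
  have hDM : D ≤ M := by
    intro d hd
    rw [hM, Subgroup.mem_comap]
    have : π d = 1 := by rw [← hker] at hd; exact hd
    rw [this]
    exact M'.one_mem
  have hMopen : IsOpen (M : Set X) := Subgroup.isOpen_mono hDM hDopen
  -- the quotient-restricted map ψ : H →* Hb ⧸ M''
  set πH := π.subgroupMap H with hπH
  have hπHsurj : Function.Surjective πH := π.subgroupMap_surjective H
  set ψ := (QuotientGroup.mk' M'').comp πH with hψ
  have hψsurj : Function.Surjective ψ := (QuotientGroup.mk'_surjective M'').comp hπHsurj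
  have hmemM'' : ∀ y : ↥Hb, y ∈ M'' ↔ (y : X ⧸ D) ∈ M' := by
    intro y
    constructor
    · intro hy
      exact ⟨y, hy, rfl⟩
    · rintro ⟨z, hz, hzy⟩
      have : z = y := Subtype.ext hzy
      rwa [← this]
  have hkerψ : ψ.ker = M.subgroupOf H := by
    ext h
    rw [MonoidHom.mem_ker, hψ, MonoidHom.comp_apply, ← MonoidHom.mem_ker,
      QuotientGroup.ker_mk' M'', hmemM'' (πH h)]
    have hco : ((πH h : ↥Hb) : X ⧸ D) = π (h : X) := rfl
    rw [hco, Subgroup.mem_subgroupOf, hM]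
    exact Iff.rfl.trans (Subgroup.mem_comap).symm
  have hrel : M.relIndex H = p := by
    have h1 : (M.subgroupOf H).index = Nat.card (↥Hb ⧸ M'') := by
      rw [← hkerψ, Subgroup.index_ker, MonoidHom.range_eq_top_of_surjective ψ hψsurj]
      exact Subgroup.card_top
    rw [Subgroup.relIndex, h1, ← Subgroup.index_eq_card, hM''idx]
  -- normality of M.subgroupOf H
  have hnorm : (M.subgroupOf H).Normal := by
    rw [← hkerψ]
    exact MonoidHom.normal_ker ψ
  exact ⟨M, hKM, hMH, hMopen, hnorm, hrel⟩





/-- Topological closure of a dense-in-`K` intersection. -/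
lemma closure_inter_eq {A : Subgroup X} {K : Subgroup X}
    (hKo : IsOpen (K : Set X)) (hsub : (K : Set X) ⊆ closure (A : Set X)) :
    closure ((A : Set X) ∩ (K : Set X)) = (K : Set X) := by
  apply Set.Subset.antisymm
  · have h1 : closure ((A : Set X) ∩ K) ⊆ closure (K : Set X) :=
      closure_mono Set.inter_subset_right
    rwa [(K.isClosed_of_isOpen hKo).closure_eq] at h1
  · intro x hx
    rw [mem_closure_iff]
    intro o ho hxo
    have hxA : x ∈ closure (A : Set X) := hsub hx
    rw [mem_closure_iff] at hxA
    obtain ⟨y, hy, hyA⟩ := hxA (o ∩ K) (ho.inter hKo) ⟨hxo, hx⟩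
    exact ⟨y, hy.1, hyA, hy.2⟩

/-- The index-`p` step of the topological Schreier lemma. -/
lemma step {p : ℕ} (hp : p.Prime) {K H : Subgroup X} (hKH : K ≤ H)
    (hKo : IsOpen (K : Set X))
    (hnorm : (K.subgroupOf H).Normal) (hidx : K.relIndex H = p)
    {S : Finset X} (hSsub : (S : Set X) ⊆ (H : Set X))
    (hSgen : closure ((Subgroup.closure (S : Set X) : Subgroup X) : Set X) = (H : Set X)) :
    ∃ T : Finset X, (T : Set X) ⊆ (K : Set X) ∧
      closure ((Subgroup.closure (T : Set X) : Subgroup X) : Set X) = (K : Set X) ∧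
      T.card ≤ p * (S.card - 1) + 1 := by
  classical
  set A := Subgroup.closure (S : Set X) with hA
  have hAH : A ≤ H := (Subgroup.closure_le H).mpr hSsub
  -- the dense finitely generated subgroup
  set S' : Finset ↥A := S.preimage ((↑) : ↥A → X)
    (Set.injOn_of_injective Subtype.coe_injective) with hS'
  have hS'coe : (S' : Set ↥A) = ((↑) : ↥A → X) ⁻¹' (S : Set X) := Finset.coe_preimage _ _
  have hS'gen : Subgroup.closure (S' : Set ↥A) = ⊤ := by
    rw [hS'coe]
    exact Subgroup.closure_closure_coe_preimage
  have hS'card : S'.card ≤ S.card := by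
    apply Finset.card_le_card_of_injOn ((↑) : ↥A → X)
    · intro a ha
      rwa [hS', Finset.mem_coe, Finset.mem_preimage] at ha
    · exact fun a _ b _ hab => Subtype.ext hab
  -- the quotient homomorphism
  haveI := hnorm
  set ψ : ↥A →* (↥H ⧸ K.subgroupOf H) :=
    (QuotientGroup.mk' (K.subgroupOf H)).comp (Subgroup.inclusion hAH) with hψ
  have hψsurj : Function.Surjective ψ := by
    intro xb
    induction' xb using QuotientGroup.induction_on with x
    -- x : ↥H; find a ∈ A in the same right coset
    have hxcl : (x : X) ∈ closure (A : Set X) := by rw [hSgen]; exact x.2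
    have hWopen : IsOpen ((fun y : X => y⁻¹ * (x : X)) ⁻¹' (K : Set X)) :=
      hKo.preimage (by continuity)
    have hxW : (x : X) ∈ (fun y : X => y⁻¹ * (x : X)) ⁻¹' (K : Set X) := by
      show (x : X)⁻¹ * (x : X) ∈ K
      rw [inv_mul_cancel]
      exact K.one_mem
    rw [mem_closure_iff] at hxcl
    obtain ⟨a, haW, haA⟩ := hxcl _ hWopen hxW
    refine ⟨⟨a, haA⟩, ?_⟩
    rw [hψ, MonoidHom.comp_apply]
    apply (QuotientGroup.eq ).mpr
    rw [Subgroup.mem_subgroupOf]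
    simpa using haW
  have hkerψ : ψ.ker = K.subgroupOf A := by
    ext a
    rw [MonoidHom.mem_ker, hψ, MonoidHom.comp_apply, ← MonoidHom.mem_ker,
      QuotientGroup.ker_mk', Subgroup.mem_subgroupOf, Subgroup.mem_subgroupOf]
    exact Iff.rfl
  have hkeridx : ψ.ker.index = p := by
    rw [Subgroup.index_ker, MonoidHom.range_eq_top_of_surjective ψ hψsurj, Subgroup.card_top,
      ← Subgroup.index_eq_card]
    exact hidx
  haveI : ψ.ker.Normal := MonoidHom.normal_ker ψ
  obtain ⟨T', hT'sub, hT'gen, hT'card⟩ := ss1 hp ψ.ker hkeridx S' hS'gen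
  -- map back to X
  set T : Finset X := T'.image ((↑) : ↥A → X) with hT
  have hTcoe : (T : Set X) = ((↑) : ↥A → X) '' (T' : Set ↥A) := Finset.coe_image
  have hTsub : (T : Set X) ⊆ (K : Set X) := by
    rw [hTcoe]
    rintro x ⟨a, ha, rfl⟩
    have : a ∈ K.subgroupOf A := by rw [← hkerψ]; exact hT'sub ha
    rwa [Subgroup.mem_subgroupOf] at this
  have hTclosure : Subgroup.closure (T : Set X) = K ⊓ A := by
    rw [hTcoe]
    have h1 : Subtype.val '' (T' : Set ↥A) = ⇑A.subtype '' (T' : Set ↥A) := rfl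
    rw [h1, ← MonoidHom.map_closure, hT'gen, hkerψ, Subgroup.subgroupOf_map_subtype]
  refine ⟨T, hTsub, ?_, le_trans Finset.card_image_le (le_trans hT'card (by
    have : S'.card - 1 ≤ S.card - 1 := by omega
    exact Nat.add_le_add_right (Nat.mul_le_mul_left p this) 1))⟩
  rw [hTclosure]
  have hKA : ((K ⊓ A : Subgroup X) : Set X) = (A : Set X) ∩ (K : Set X) := by
    rw [Subgroup.coe_inf, Set.inter_comm]
  rw [hKA]
  exact closure_inter_eq hKo (by rw [hSgen] at *; exact fun x hx => hSgen ▸ (hKH hx))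




lemma relindex_ne_zero [CompactSpace X] {K H : Subgroup X}
    (hHo : IsOpen (H : Set X)) (hKo : IsOpen (K : Set X)) (hKH : K ≤ H) :
    K.relIndex H ≠ 0 := by
  have h1 : IsOpen ((K.subgroupOf H : Subgroup ↥H) : Set ↥H) := Subgroup.subgroupOf_isOpen H K hKo
  have hfin : Finite (↥H ⧸ K.subgroupOf H) := Subgroup.quotient_finite_of_isOpen' H _ hHo h1
  exact (Subgroup.finiteIndex_of_finite_quotient : (K.subgroupOf H).FiniteIndex).index_ne_zero

/-- Topological Schreier bound: if `K ≤ H` are open subgroups of a compact group all of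
whose open normal subgroups have `p`-power index, and `S` topologically generates `H`, then
`K` has a topological generating set of at most `relindex K H * (|S| - 1) + 1` elements. -/
lemma top_schreier [CompactSpace X] {p : ℕ} (hp : p.Prime)
    (hP : ∀ U : Subgroup X, U.Normal → IsOpen (U : Set X) → ∃ n : ℕ, U.index = p ^ n) :
    ∀ n : ℕ, ∀ K H : Subgroup X, IsOpen (K : Set X) → IsOpen (H : Set X) → K ≤ H →
      K.relIndex H = n →
      ∀ S : Finset X, (S : Set X) ⊆ (H : Set X) →
        closure ((Subgroup.closure (S : Set X) : Subgroup X) : Set X) = (H : Set X) →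
        ∃ T : Finset X, (T : Set X) ⊆ (K : Set X) ∧
          closure ((Subgroup.closure (T : Set X) : Subgroup X) : Set X) = (K : Set X) ∧
          T.card ≤ n * (S.card - 1) + 1 := by
  intro n
  induction n using Nat.strong_induction_on with
  | _ n ih =>
    intro K H hKo hHo hKH hrel S hSsub hSgen
    rcases eq_or_ne K H with rfl | hne
    · rw [Subgroup.relIndex_self] at hrel
      obtain rfl := hrel
      exact ⟨S, hSsub, hSgen, by omega⟩
    · obtain ⟨M, hKM, hMH, hMo, hMnorm, hMrel⟩ := chain_step hp hP hKH hKo hne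
      obtain ⟨SM, hSMsub, hSMgen, hSMcard⟩ := step hp hMH hMo hMnorm hMrel hSsub hSgen
      have hmul : K.relIndex M * M.relIndex H = K.relIndex H :=
        Subgroup.relIndex_mul_relIndex K M H hKM hMH
      set m := K.relIndex M with hm
      have hnz : K.relIndex H ≠ 0 := relindex_ne_zero hHo hKo hKH
      have hmn : m * p = n := by rw [hm, ← hMrel, hmul, hrel]
      have hmne : m ≠ 0 := by
        intro hcon
        rw [hcon, zero_mul] at hmn
        exact hnz (hrel ▸ hmn.symm)
      have hmlt : m < n := by
        have h2 : m * 1 < m * p := Nat.mul_lt_mul_of_pos_left hp.one_lt (Nat.pos_of_ne_zero hmne)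
        rw [mul_one] at h2
        omega
      obtain ⟨T, hTsub, hTgen, hTcard⟩ := ih m hmlt K M hKo hMo hKM rfl SM hSMsub hSMgen
      refine ⟨T, hTsub, hTgen, ?_⟩
      have h1 : SM.card - 1 ≤ p * (S.card - 1) := by omega
      calc T.card ≤ m * (SM.card - 1) + 1 := hTcard
      _ ≤ m * (p * (S.card - 1)) + 1 := by
          exact Nat.add_le_add_right (Nat.mul_le_mul_left m h1) 1
      _ = n * (S.card - 1) + 1 := by rw [← mul_assoc, hmn]



variable {G : Type*} [Group G]

lemma relindex_sup_aux {H N : Subgroup G} [hN : N.Normal] :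
    ∃ f : ↥N → (↥(H ⊔ N) ⧸ H.subgroupOf (H ⊔ N)),
      Function.Surjective f ∧ (H ⊓ N = ⊥ → Function.Injective f) := by
  refine ⟨fun n => QuotientGroup.mk ⟨(n : G), (le_sup_right : N ≤ H ⊔ N) n.2⟩, ?_, ?_⟩
  · intro jb
    induction' jb using QuotientGroup.induction_on with j
    have hj : (j : G) ∈ (↑(N ⊔ H) : Set G) := by
      rw [sup_comm]
      exact j.2
    rw [Subgroup.normal_mul] at hj
    obtain ⟨n, hn, h, hh, hnh⟩ := hj
    refine ⟨⟨n, hn⟩, ?_⟩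
    apply (QuotientGroup.eq (s := H.subgroupOf (H ⊔ N))).mpr
    rw [Subgroup.mem_subgroupOf]
    show ((⟨n, _⟩ : ↥(H ⊔ N)) : G)⁻¹ * (j : G) ∈ H
    rw [← hnh]
    simpa using hh
  · intro hdisj n1 n2 heq
    have h1 := (QuotientGroup.eq (s := H.subgroupOf (H ⊔ N))).mp heq
    rw [Subgroup.mem_subgroupOf] at h1
    have h2 : (n1 : G)⁻¹ * (n2 : G) ∈ H := h1
    have h3 : (n1 : G)⁻¹ * (n2 : G) ∈ N := N.mul_mem (N.inv_mem n1.2) n2.2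
    have h4 : (n1 : G)⁻¹ * (n2 : G) ∈ H ⊓ N := ⟨h2, h3⟩
    rw [hdisj, Subgroup.mem_bot] at h4
    exact Subtype.ext (inv_mul_eq_one.mp h4)

lemma relindex_sup_le_card {H N : Subgroup G} [hN : N.Normal] [Finite ↥N] :
    H.relIndex (H ⊔ N) ≤ Nat.card ↥N := by
  obtain ⟨f, hsurj, _⟩ := relindex_sup_aux (H := H) (N := N)
  rw [Subgroup.relIndex, Subgroup.index_eq_card]
  exact Nat.card_le_card_of_surjective f hsurj

lemma relindex_sup_eq_card {H N : Subgroup G} [hN : N.Normal] [Finite ↥N]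
    (hdisj : H ⊓ N = ⊥) : H.relIndex (H ⊔ N) = Nat.card ↥N := by
  obtain ⟨f, hsurj, hinj⟩ := relindex_sup_aux (H := H) (N := N)
  rw [Subgroup.relIndex, Subgroup.index_eq_card]
  exact (Nat.card_eq_of_bijective f ⟨hinj hdisj, hsurj⟩).symm



variable {Y : Type*} [Group Y] [TopologicalSpace Y] [IsTopologicalGroup Y]

lemma topRank_le {H : Subgroup X} {T : Finset X} (hsub : (T : Set X) ⊆ (H : Set X))
    (hgen : closure ((Subgroup.closure (T : Set X) : Subgroup X) : Set X) = (H : Set X)) :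
    topRank H ≤ T.card :=
  Nat.sInf_le ⟨T, rfl, hsub, hgen⟩

lemma topfg_witness {H : Subgroup X} (h : TopFG H) :
    ∃ S : Finset X, S.card = topRank H ∧ (S : Set X) ⊆ (H : Set X) ∧
      closure ((Subgroup.closure (S : Set X) : Subgroup X) : Set X) = (H : Set X) := by
  have hne : {n : ℕ | ∃ S : Finset X, S.card = n ∧ (S : Set X) ⊆ (H : Set X) ∧
      closure ((Subgroup.closure (S : Set X) : Subgroup X) : Set X) = (H : Set X)}.Nonempty := by
    obtain ⟨S, h1, h2⟩ := h
    exact ⟨S.card, S, rfl, h1, h2⟩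
  obtain ⟨S, hc, h1, h2⟩ := Nat.sInf_mem hne
  exact ⟨S, hc, h1, h2⟩

lemma topRank_pos [T1Space X] {H : Subgroup X} (hfg : TopFG H) (hne : H ≠ ⊥) :
    1 ≤ topRank H := by
  by_contra h
  push_neg at h
  interval_cases h' : topRank H
  · obtain ⟨S, hc, _, h2⟩ := topfg_witness hfg
    rw [h'] at hc
    rw [Finset.card_eq_zero.mp hc] at h2
    simp only [Finset.coe_empty, Subgroup.closure_empty, Subgroup.coe_bot] at h2
    rw [closure_singleton] at h2
    apply hne
    apply SetLike.coe_injective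
    rw [← h2, Subgroup.coe_bot]

lemma open_ne_bot [CompactSpace X] [Infinite X] {K : Subgroup X} (hK : IsOpen (K : Set X)) :
    K ≠ ⊥ := by
  intro hcon
  have hfin : Finite (X ⧸ K) := K.quotient_finite_of_isOpen hK
  have h1 : Nat.card ↥K * K.index = Nat.card X := K.card_mul_index
  have h2 : Nat.card X = 0 := Nat.card_eq_zero_of_infinite
  have h3 : K.index ≠ 0 := (K.finiteIndex_of_finite_quotient).index_ne_zero
  have h4 : Nat.card ↥K = 0 := by
    rcases Nat.mul_eq_zero.mp (h1.trans h2) with h | h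
    · exact h
    · exact absurd h h3
  rw [hcon] at h4
  rw [Subgroup.card_bot] at h4
  omega

lemma image_closure [CompactSpace X] [T2Space Y] {f : X →* Y} (hf : Continuous f) (A : Set X) :
    f '' closure A = closure (f '' A) := by
  apply Set.Subset.antisymm (image_closure_subset_closure_image hf)
  apply closure_minimal (Set.image_mono subset_closure)
  exact hf.isClosedMap _ isClosed_closure

lemma gen_image [CompactSpace X] [T2Space Y] {f : X →* Y} (hf : Continuous f)
    {H : Subgroup X} {S : Finset X} (hsub : (S : Set X) ⊆ (H : Set X))
    (hgen : closure ((Subgroup.closure (S : Set X) : Subgroup X) : Set X) = (H : Set X)) :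
    ∃ T : Finset Y, T.card ≤ S.card ∧ ((T : Finset Y) : Set Y) ⊆ ((H.map f : Subgroup Y) : Set Y) ∧
      closure ((Subgroup.closure ((T : Finset Y) : Set Y) : Subgroup Y) : Set Y)
        = ((H.map f : Subgroup Y) : Set Y) := by
  classical
  refine ⟨S.image f, Finset.card_image_le, ?_, ?_⟩
  · rw [Finset.coe_image, Subgroup.coe_map]
    exact Set.image_mono hsub
  · rw [Finset.coe_image, ← MonoidHom.map_closure, Subgroup.coe_map, ← image_closure hf,
      hgen, Subgroup.coe_map]

lemma topfg_map [CompactSpace X] [T2Space Y] {f : X →* Y} (hf : Continuous f)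
    {H : Subgroup X} (hfg : TopFG H) : TopFG (H.map f) := by
  obtain ⟨S, h1, h2⟩ := hfg
  obtain ⟨T, _, h3, h4⟩ := gen_image hf h1 h2
  exact ⟨T, h3, h4⟩

lemma topRank_map_le [CompactSpace X] [T2Space Y] {f : X →* Y} (hf : Continuous f)
    {H : Subgroup X} (hfg : TopFG H) : topRank (H.map f) ≤ topRank H := by
  obtain ⟨S, hc, h1, h2⟩ := topfg_witness hfg
  obtain ⟨T, hcard, h3, h4⟩ := gen_image hf h1 h2
  exact le_trans (topRank_le h3 h4) (le_trans hcard hc.le)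

lemma topRank_le_map [CompactSpace X] [T2Space Y] {f : X →* Y} (hf : Continuous f)
    {K : Subgroup X} (hKc : IsClosed (K : Set X))
    (hinj : ∀ x ∈ K, f x = 1 → x = 1) (hfgm : TopFG (K.map f)) :
    topRank K ≤ topRank (K.map f) := by
  classical
  obtain ⟨T, hc, h1, h2⟩ := topfg_witness hfgm
  -- choose preimages in K
  set g : Y → X := fun y => if h : ∃ x, x ∈ K ∧ f x = y then h.choose else 1 with hg
  have hgK : ∀ y ∈ (T : Set Y), g y ∈ K ∧ f (g y) = y := by
    intro y hy
    have hyK : y ∈ K.map f := h1 hy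
    obtain ⟨x, hx, hfx⟩ := hyK
    have hex : ∃ x, x ∈ K ∧ f x = y := ⟨x, hx, hfx⟩
    rw [hg]
    simp only [dif_pos hex]
    exact hex.choose_spec
  set T' : Finset X := T.image g with hT'
  have hT'sub : (T' : Set X) ⊆ (K : Set X) := by
    rw [hT', Finset.coe_image]
    rintro x ⟨y, hy, rfl⟩
    exact (hgK y hy).1
  have himg : f '' (T' : Set X) = (T : Set Y) := by
    rw [hT', Finset.coe_image, ← Set.image_comp]
    apply Set.Subset.antisymm
    · rintro y ⟨z, hz, rfl⟩
      show f (g z) ∈ (T : Set Y)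
      rw [(hgK z hz).2]
      exact hz
    · intro y hy
      exact ⟨y, hy, (hgK y hy).2⟩
  -- the candidate closed generated set
  set M : Set X := closure ((Subgroup.closure (T' : Set X) : Subgroup X) : Set X) with hM
  have hMsubK : M ⊆ (K : Set X) := by
    rw [hM]
    have : (Subgroup.closure (T' : Set X) : Set X) ⊆ (K : Set X) :=
      (Subgroup.closure_le K).mpr hT'sub
    exact hKc.closure_eq ▸ closure_mono this
  have hfM : f '' M = f '' (K : Set X) := by
    rw [hM, image_closure hf]
    have e1 : f '' ((Subgroup.closure (T' : Set X) : Subgroup X) : Set X)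
        = ((Subgroup.closure (T : Set Y) : Subgroup Y) : Set Y) := by
      rw [← Subgroup.coe_map, MonoidHom.map_closure, himg]
    rw [e1, h2, Subgroup.coe_map]
  have hKM : (K : Set X) ⊆ M := by
    intro x hx
    have : f x ∈ f '' M := by rw [hfM]; exact ⟨x, hx, rfl⟩
    obtain ⟨m, hm, hfm⟩ := this
    have hmK : m ∈ K := hMsubK hm
    have hmem : m⁻¹ * x ∈ K := K.mul_mem (K.inv_mem hmK) hx
    have : f (m⁻¹ * x) = 1 := by rw [map_mul, map_inv, hfm, inv_mul_cancel]
    have hxm : m = x := inv_mul_eq_one.mp (hinj _ hmem this)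
    rwa [← hxm]
  have hMK : M = (K : Set X) := Set.Subset.antisymm hMsubK hKM
  calc topRank K ≤ T'.card := topRank_le hT'sub hMK
  _ ≤ T.card := Finset.card_image_le
  _ = topRank (K.map f) := hc


section MoreAux

lemma topfg_of_open [CompactSpace X] {p : ℕ} (hp : p.Prime)
    (hP : ∀ U : Subgroup X, U.Normal → IsOpen (U : Set X) → ∃ n : ℕ, U.index = p ^ n)
    (hfgtop : TopFG (⊤ : Subgroup X)) {K : Subgroup X} (hKo : IsOpen (K : Set X)) :
    TopFG K := by
  obtain ⟨S, hS1, hS2⟩ := hfgtop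
  obtain ⟨T, h1, h2, _⟩ := top_schreier hp hP (K.relIndex ⊤) K ⊤ hKo
    (by rw [Subgroup.coe_top]; exact isOpen_univ) le_top rfl S hS1 hS2
  exact ⟨T, h1, h2⟩

lemma topRank_le_relindex [CompactSpace X] {p : ℕ} (hp : p.Prime)
    (hP : ∀ U : Subgroup X, U.Normal → IsOpen (U : Set X) → ∃ n : ℕ, U.index = p ^ n)
    {K H : Subgroup X} (hKo : IsOpen (K : Set X)) (hHo : IsOpen (H : Set X)) (hKH : K ≤ H)
    (hfgH : TopFG H) :
    topRank K ≤ K.relIndex H * (topRank H - 1) + 1 := by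
  obtain ⟨S, hc, h1, h2⟩ := topfg_witness hfgH
  obtain ⟨T, t1, t2, t3⟩ := top_schreier hp hP (K.relIndex H) K H hKo hHo hKH rfl S h1 h2
  calc topRank K ≤ T.card := topRank_le t1 t2
  _ ≤ K.relIndex H * (S.card - 1) + 1 := t3
  _ = K.relIndex H * (topRank H - 1) + 1 := by rw [hc]

lemma rg_set_bddBelow (X : Type*) [Group X] [TopologicalSpace X] :
    BddBelow {x : ℝ | ∃ H : Subgroup X, IsOpen (H : Set X) ∧
      x = ((topRank H : ℝ) - 1) / (H.index : ℝ)} := by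
  refine ⟨-1, ?_⟩
  rintro x ⟨H, _, rfl⟩
  rcases eq_or_ne ((H.index : ℝ)) 0 with h | h
  · rw [h, div_zero]; norm_num
  · have hpos : (0:ℝ) < (H.index : ℝ) :=
      lt_of_le_of_ne (Nat.cast_nonneg _) (Ne.symm h)
    rw [le_div_iff₀ hpos]
    have h1 : (1:ℝ) ≤ (H.index : ℝ) := by
      have : (1:ℕ) ≤ H.index := Nat.one_le_iff_ne_zero.mpr (by exact_mod_cast h)
      exact_mod_cast this
    have h2 : (0:ℝ) ≤ (topRank H : ℝ) := Nat.cast_nonneg _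
    nlinarith

lemma rg_set_nonempty (X : Type*) [Group X] [TopologicalSpace X] :
    {x : ℝ | ∃ H : Subgroup X, IsOpen (H : Set X) ∧
      x = ((topRank H : ℝ) - 1) / (H.index : ℝ)}.Nonempty :=
  ⟨((topRank (⊤ : Subgroup X) : ℝ) - 1) / ((⊤ : Subgroup X).index : ℝ),
    ⊤, by rw [Subgroup.coe_top]; exact isOpen_univ, rfl⟩

end MoreAux
end RGAux

/-- **Lemma.** Let `G` be a finitely generated infinite pro-`p` group and `N ⊴ G` a finite
normal subgroup. Then `RG(G/N) = |N| · RG(G)`. -/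
theorem statement13 (p : ℕ) (hp : p.Prime) (G : Type*) [Group G] [TopologicalSpace G]
    [IsTopologicalGroup G] (hG : IsProPGroup p G) (hfg : TopFG (⊤ : Subgroup G))
    (hinf : Infinite G) (N : Subgroup G) (hN : N.Normal) (hNfin : (N : Set G).Finite) :
    quotientRankGradient N hN = (Nat.card N : ℝ) * rankGradient G := by
  classical
  obtain ⟨hcomp, ht2, htd, hPG⟩ := hG
  haveI := hcomp
  haveI := ht2
  haveI := htd
  haveI := hN
  haveI : IsClosed (N : Set G) := hNfin.isClosed
  haveI hNfin' : Finite ↥N := hNfin.to_subtype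
  haveI : Nonempty ↥N := ⟨⟨1, N.one_mem⟩⟩
  set π : G →* G ⧸ N := QuotientGroup.mk' N with hπdef
  have hπcont : Continuous π := QuotientGroup.continuous_mk
  have hπsurj : Function.Surjective π := QuotientGroup.mk'_surjective N
  have hπker : π.ker = N := QuotientGroup.ker_mk' N
  have hπopen : IsOpenMap π := QuotientGroup.isOpenMap_coe
  haveI : T2Space (G ⧸ N) := inferInstance
  -- the p-power index property passes to the quotient
  have hPQ : ∀ U : Subgroup (G ⧸ N), U.Normal → IsOpen (U : Set (G ⧸ N)) →
      ∃ n : ℕ, U.index = p ^ n := by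
    intro U hU hUo
    have h1 : IsOpen ((U.comap π : Subgroup G) : Set G) := by
      rw [Subgroup.coe_comap]
      exact hUo.preimage hπcont
    have h2 : (U.comap π).Normal := hU.comap π
    obtain ⟨n, hn⟩ := hPG _ h2 h1
    rw [Subgroup.index_comap_of_surjective _ hπsurj] at hn
    exact ⟨n, hn⟩
  -- the quotient is infinite
  haveI : Infinite (G ⧸ N) := by
    have h1 : Nat.card ↥N * N.index = Nat.card G := N.card_mul_index
    have h2 : Nat.card G = 0 := Nat.card_eq_zero_of_infinite
    have h3 : Nat.card ↥N ≠ 0 := Nat.card_pos.ne'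
    have h4 : N.index = 0 := by
      rcases Nat.mul_eq_zero.mp (h1.trans h2) with h | h
      · exact absurd h h3
      · exact h
    rw [Subgroup.index_eq_card] at h4
    rcases Nat.card_eq_zero.mp h4 with h | h
    · exact absurd (Nonempty.map π inferInstance) (not_nonempty_iff.mpr h)
    · exact h
  -- top of the quotient is topologically f.g.
  have hfgQtop : TopFG (⊤ : Subgroup (G ⧸ N)) := by
    have h1 := RGAux.topfg_map hπcont hfg
    rwa [Subgroup.map_top_of_surjective _ hπsurj] at h1
  -- every open subgroup is topologically f.g.
  have hTopFG_G : ∀ K : Subgroup G, IsOpen (K : Set G) → TopFG K :=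
    fun K hKo => RGAux.topfg_of_open hp hPG hfg hKo
  have hTopFG_Q : ∀ K : Subgroup (G ⧸ N), IsOpen (K : Set (G ⧸ N)) → TopFG K :=
    fun K hKo => RGAux.topfg_of_open hp hPQ hfgQtop hKo
  -- the two rank-gradient sets
  set Sg : Set ℝ := {x : ℝ | ∃ H : Subgroup G, IsOpen (H : Set G) ∧
    x = ((topRank H : ℝ) - 1) / (H.index : ℝ)} with hSg
  set Sq : Set ℝ := {x : ℝ | ∃ H : Subgroup (G ⧸ N), IsOpen (H : Set (G ⧸ N)) ∧
    x = ((topRank H : ℝ) - 1) / (H.index : ℝ)} with hSq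
  have hbddG : BddBelow Sg := RGAux.rg_set_bddBelow G
  have hbddQ : BddBelow Sq := RGAux.rg_set_bddBelow (G ⧸ N)
  have hneG : Sg.Nonempty := RGAux.rg_set_nonempty G
  have hneQ : Sq.Nonempty := RGAux.rg_set_nonempty (G ⧸ N)
  set c : ℝ := (Nat.card ↥N : ℝ) with hcdef
  have hc0 : (0:ℝ) < c := by
    rw [hcdef]
    exact_mod_cast Nat.card_pos
  -- a separating open subgroup
  obtain ⟨U, hUo, hUN⟩ : ∃ U : Subgroup G, IsOpen (U : Set G) ∧ U ⊓ N = ⊥ := by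
    have hFfin : ((N : Set G) \ {1}).Finite := hNfin.subset Set.diff_subset
    have hFclosed : IsClosed ((N : Set G) \ {1}) := hFfin.isClosed
    have h1mem : (1:G) ∈ ((N : Set G) \ {1})ᶜ := by simp
    obtain ⟨W, hWclopen, h1W, hWsub⟩ :=
      compact_exists_isClopen_in_isOpen hFclosed.isOpen_compl h1mem
    obtain ⟨V, hV⟩ := IsTopologicalGroup.exist_openSubgroup_sub_clopen_nhds_of_one hWclopen h1W
    refine ⟨V.toSubgroup, V.isOpen, ?_⟩
    rw [eq_bot_iff]
    intro x hx
    rw [Subgroup.mem_inf] at hx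
    rw [Subgroup.mem_bot]
    by_contra hx1
    exact (hWsub (hV hx.1)) ⟨hx.2, hx1⟩
  -- ===== direction ≤ : sInf Sq ≤ c * sInf Sg =====
  have claim1 : ∀ H : Subgroup G, IsOpen (H : Set G) →
      sInf Sq ≤ c * (((topRank H : ℝ) - 1) / (H.index : ℝ)) := by
    intro H hHo
    set Q := H.map π with hQdef
    have hQo : IsOpen (Q : Set (G ⧸ N)) := by
      rw [hQdef, Subgroup.coe_map]
      exact hπopen _ hHo
    have hHfg : TopFG H := hTopFG_G H hHo
    have hd2led1 : topRank Q ≤ topRank H := RGAux.topRank_map_le hπcont hHfg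
    have hQfg : TopFG Q := RGAux.topfg_map hπcont hHfg
    have hd2pos : 1 ≤ topRank Q := RGAux.topRank_pos hQfg (RGAux.open_ne_bot hQo)
    have hd1pos : 1 ≤ topRank H := RGAux.topRank_pos hHfg (RGAux.open_ne_bot hHo)
    have hHNopen : IsOpen ((H ⊔ N : Subgroup G) : Set G) := Subgroup.isOpen_mono le_sup_left hHo
    have hidxQ : Q.index = (H ⊔ N).index := by
      have h1 : Q.comap π = H ⊔ N := by rw [hQdef, Subgroup.comap_map_eq, hπker]
      rw [← Subgroup.index_comap_of_surjective Q hπsurj, h1]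
    have hrelle : H.relIndex (H ⊔ N) ≤ Nat.card ↥N := RGAux.relindex_sup_le_card
    have hidxH : H.relIndex (H ⊔ N) * (H ⊔ N).index = H.index :=
      Subgroup.relIndex_mul_index le_sup_left
    have hHidx : H.index ≠ 0 := (RGAux.open_finiteIndex hHo).index_ne_zero
    have hJidx : (H ⊔ N).index ≠ 0 := (RGAux.open_finiteIndex hHNopen).index_ne_zero
    have step1 : sInf Sq ≤ ((topRank Q : ℝ) - 1) / (Q.index : ℝ) :=
      csInf_le hbddQ ⟨Q, hQo, rfl⟩
    apply le_trans step1
    rw [hidxQ]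
    have hJpos : (0:ℝ) < ((H ⊔ N).index : ℝ) := by
      exact_mod_cast Nat.pos_of_ne_zero hJidx
    have hHpos : (0:ℝ) < (H.index : ℝ) := by
      exact_mod_cast Nat.pos_of_ne_zero hHidx
    rw [mul_div_assoc'] at *
    rw [div_le_div_iff₀ hJpos hHpos]
    have hcast : (H.index : ℝ) = (H.relIndex (H ⊔ N) : ℝ) * ((H ⊔ N).index : ℝ) := by
      exact_mod_cast hidxH.symm
    rw [hcast]
    have e1 : ((topRank Q : ℝ) - 1) * (H.relIndex (H ⊔ N) : ℝ) ≤ ((topRank H : ℝ) - 1) * c := by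
      apply mul_le_mul
      · have : (topRank Q : ℝ) ≤ (topRank H : ℝ) := by exact_mod_cast hd2led1
        linarith
      · rw [hcdef]; exact_mod_cast hrelle
      · exact Nat.cast_nonneg _
      · have : (1:ℝ) ≤ (topRank H : ℝ) := by exact_mod_cast hd1pos
        linarith
    calc ((topRank Q : ℝ) - 1) * ((H.relIndex (H ⊔ N) : ℝ) * ((H ⊔ N).index : ℝ))
        = (((topRank Q : ℝ) - 1) * (H.relIndex (H ⊔ N) : ℝ)) * ((H ⊔ N).index : ℝ) := by ring
    _ ≤ (((topRank H : ℝ) - 1) * c) * ((H ⊔ N).index : ℝ) :=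
        mul_le_mul_of_nonneg_right e1 hJpos.le
    _ = c * ((topRank H : ℝ) - 1) * ((H ⊔ N).index : ℝ) := by ring
  have hLE : sInf Sq ≤ c * sInf Sg := by
    have h1 : sInf Sq / c ≤ sInf Sg := by
      apply le_csInf hneG
      rintro x ⟨H, hHo, rfl⟩
      rw [div_le_iff₀ hc0, mul_comm]
      exact claim1 H hHo
    have h2 := mul_le_mul_of_nonneg_left h1 hc0.le
    rwa [mul_div_cancel₀ _ hc0.ne'] at h2
  -- ===== direction ≥ : c * sInf Sg ≤ sInf Sq =====
  have hGE : c * sInf Sg ≤ sInf Sq := by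
    apply le_csInf hneQ
    rintro y ⟨Q, hQo, rfl⟩
    set H := Q.comap π with hHdef
    have hHo : IsOpen (H : Set G) := by
      rw [hHdef, Subgroup.coe_comap]
      exact hQo.preimage hπcont
    have hmapH : H.map π = Q := Subgroup.map_comap_eq_self_of_surjective hπsurj Q
    set K := H ⊓ U with hKdef
    have hKo : IsOpen (K : Set G) := by
      rw [hKdef, Subgroup.coe_inf]
      exact hHo.inter hUo
    have hKH : K ≤ H := inf_le_left
    have hKN : K ⊓ N = ⊥ := by
      rw [eq_bot_iff, ← hUN]
      intro x hx
      rw [Subgroup.mem_inf] at hx ⊢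
      exact ⟨hx.1.2, hx.2⟩
    set Q' := K.map π with hQ'def
    have hQ'o : IsOpen (Q' : Set (G ⧸ N)) := by
      rw [hQ'def, Subgroup.coe_map]
      exact hπopen _ hKo
    have hQ'Q : Q' ≤ Q := by
      rw [hQ'def, ← hmapH]
      exact Subgroup.map_mono hKH
    have hKfg : TopFG K := hTopFG_G K hKo
    have hQ'fg : TopFG Q' := RGAux.topfg_map hπcont hKfg
    have hinjK : ∀ x ∈ K, π x = 1 → x = 1 := by
      intro x hx h1
      have hxN : x ∈ N := by rw [← hπker]; exact h1
      have : x ∈ K ⊓ N := ⟨hx, hxN⟩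
      rwa [hKN, Subgroup.mem_bot] at this
    have hd_eq : topRank K = topRank Q' :=
      le_antisymm (RGAux.topRank_le_map hπcont (K.isClosed_of_isOpen hKo) hinjK hQ'fg)
        (RGAux.topRank_map_le hπcont hKfg)
    have hQfg : TopFG Q := hTopFG_Q Q hQo
    set m := Q'.relIndex Q with hmdef
    have hSch : topRank Q' ≤ m * (topRank Q - 1) + 1 :=
      RGAux.topRank_le_relindex hp hPQ hQ'o hQo hQ'Q hQfg
    -- indices
    have hKNopen : IsOpen ((K ⊔ N : Subgroup G) : Set G) := Subgroup.isOpen_mono le_sup_left hKo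
    have hidxQ' : Q'.index = (K ⊔ N).index := by
      have h1 : Q'.comap π = K ⊔ N := by rw [hQ'def, Subgroup.comap_map_eq, hπker]
      rw [← Subgroup.index_comap_of_surjective Q' hπsurj, h1]
    have hrel_eq : K.relIndex (K ⊔ N) = Nat.card ↥N := RGAux.relindex_sup_eq_card hKN
    have hKidx : K.relIndex (K ⊔ N) * (K ⊔ N).index = K.index :=
      Subgroup.relIndex_mul_index le_sup_left
    have hmQ : m * Q.index = Q'.index := Subgroup.relIndex_mul_index hQ'Q
    have hKne : K.index ≠ 0 := (RGAux.open_finiteIndex hKo).index_ne_zero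
    have hJne : (K ⊔ N).index ≠ 0 := (RGAux.open_finiteIndex hKNopen).index_ne_zero
    have hQ'ne : Q'.index ≠ 0 := (RGAux.open_finiteIndex hQ'o).index_ne_zero
    have hQne : Q.index ≠ 0 := (RGAux.open_finiteIndex hQo).index_ne_zero
    have hmne : m ≠ 0 := by
      intro hcon
      rw [hcon, zero_mul] at hmQ
      exact hQ'ne hmQ.symm
    have hdQ : 1 ≤ topRank Q := RGAux.topRank_pos hQfg (RGAux.open_ne_bot hQo)
    have hdQ' : 1 ≤ topRank Q' := RGAux.topRank_pos hQ'fg (RGAux.open_ne_bot hQ'o)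
    -- the final computation
    have hKindexℝ : (K.index : ℝ) = c * ((K ⊔ N).index : ℝ) := by
      rw [hcdef, ← hKidx, hrel_eq]
      push_cast
      ring
    have hQ'pos : (0:ℝ) < (Q'.index : ℝ) := by exact_mod_cast Nat.pos_of_ne_zero hQ'ne
    have hQpos : (0:ℝ) < (Q.index : ℝ) := by exact_mod_cast Nat.pos_of_ne_zero hQne
    have hfin : c * (((topRank K : ℝ) - 1) / (K.index : ℝ)) ≤
        ((topRank Q : ℝ) - 1) / (Q.index : ℝ) := by
      have hJQ' : ((K ⊔ N).index : ℝ) = (Q'.index : ℝ) := by exact_mod_cast hidxQ'.symm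
      rw [hKindexℝ, hJQ']
      have e0 : c * (((topRank K : ℝ) - 1) / (c * (Q'.index : ℝ)))
          = ((topRank K : ℝ) - 1) / (Q'.index : ℝ) := by
        rw [mul_div_assoc']
        exact mul_div_mul_left _ _ hc0.ne'
      rw [e0, hd_eq, div_le_div_iff₀ hQ'pos hQpos]
      have hQ'cast : (Q'.index : ℝ) = (m : ℝ) * (Q.index : ℝ) := by exact_mod_cast hmQ.symm
      rw [hQ'cast]
      have hSchR : (topRank Q' : ℝ) - 1 ≤ (m : ℝ) * ((topRank Q : ℝ) - 1) := by
        have h1 : (topRank Q' : ℝ) ≤ (m : ℝ) * ((topRank Q - 1 : ℕ) : ℝ) + 1 := by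
          exact_mod_cast hSch
        rw [Nat.cast_sub hdQ] at h1
        push_cast at h1
        linarith
      calc ((topRank Q' : ℝ) - 1) * (Q.index : ℝ)
          ≤ ((m : ℝ) * ((topRank Q : ℝ) - 1)) * (Q.index : ℝ) :=
          mul_le_mul_of_nonneg_right hSchR hQpos.le
      _ = ((topRank Q : ℝ) - 1) * ((m : ℝ) * (Q.index : ℝ)) := by ring
    calc c * sInf Sg ≤ c * (((topRank K : ℝ) - 1) / (K.index : ℝ)) :=
        mul_le_mul_of_nonneg_left (csInf_le hbddG ⟨K, hKo, rfl⟩) hc0.le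
    _ ≤ ((topRank Q : ℝ) - 1) / (Q.index : ℝ) := hfin
  have hfinal : sInf Sq = c * sInf Sg := le_antisymm hLE hGE
  show rankGradient (G ⧸ N) = c * rankGradient G
  exact hfinal
end
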